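/- A simplicial set X is stiff if and only if for all 0 ≤ i ≤ n the following square is a pullback of sets: top map s_i : X_n → X_{n+1}; right map (d_⊥)^i(d_⊤)^{n−i} : X_{n+1} → X_1; bottom map s_0 : X_0 → X_1; left map (d_⊥)^i(d_⊤)^{n−i} : X_n → X_0. (Here d_⊥ and d_⊤ denote the bottom and top face maps.) -/

import Mathlib

open CategoryTheory CategoryTheory.Limits Simplicial Opposite

/-- A map in the simplex category is *generic* if it preserves the endpoints. -/
def IsGeneric {a b : SimplexCategory} (g : a ⟶ b) : Prop :=
  g.toOrderHom 0 = 0 ∧ g.toOrderHom (Fin.last a.len) = Fin.last b.len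

/-- A map in the simplex category is *free* if it is distance preserving. -/
def IsFree {a b : SimplexCategory} (f : a ⟶ b) : Prop :=
  ∀ i : Fin (a.len + 1), (f.toOrderHom i : ℕ) = (f.toOrderHom 0 : ℕ) + (i : ℕ)

/-- A decomposition space is a simplicial set carrying every pushout in `Δ` of a
generic map `g` along a free map `f` to a pullback of sets. -/
def IsDecomposition (X : SSet) : Prop :=
  ∀ ⦃a b c d : SimplexCategory⦄ (g : a ⟶ b) (f : a ⟶ c) (h : b ⟶ d) (k : c ⟶ d),
    IsGeneric g → IsFree f → IsPushout g f h k →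
    IsPullback (X.map h.op) (X.map k.op) (X.map g.op) (X.map f.op)

/-- A simplicial set is *complete* if all degeneracy maps are injective. -/
def Complete (X : SSet) : Prop :=
  ∀ (n : ℕ) (i : Fin (n + 1)), Function.Injective (X.σ i : X _⦋n⦌ ⟶ X _⦋n + 1⦌)

/-- The free map `[1] → [n]` sending `0, 1` to `i, i+1`; it induces the map
taking the `i`-th principal edge (`0`-indexed) of an `n`-simplex. -/
def principalEdge (n : ℕ) (i : Fin n) : (⦋1⦌ : SimplexCategory) ⟶ ⦋n⦌ :=
  SimplexCategory.mkHom
    { toFun := fun j => ⟨i.1 + j.1, by have := i.2; have := j.2; omega⟩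
      monotone' := fun a b h => by
        simp only [Fin.mk_le_mk]
        exact Nat.add_le_add_left h i.1 }

/-- The unique generic map `[1] → [n]` (`0 ↦ 0`, `1 ↦ n`); it induces the map
taking the long edge of an `n`-simplex. -/
def longEdgeMap (n : ℕ) : (⦋1⦌ : SimplexCategory) ⟶ ⦋n⦌ :=
  SimplexCategory.mkHom
    { toFun := fun j => ⟨j.1 * n, by
        have h := j.2
        have : j.1 * n ≤ 1 * n := Nat.mul_le_mul_right n (by omega)
        omega⟩
      monotone' := fun a b h => by
        simp only [Fin.mk_le_mk]
        exact Nat.mul_le_mul_right n h }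

/-- The alphabet `{0, 1, a}`: `z` prescribes a degenerate principal edge, `o` an
unrestricted one, `a` a nondegenerate one. -/
inductive Letter where
  | z
  | o
  | a : Letter
  deriving DecidableEq

/-- The subset of `X₁` prescribed by a letter. -/
def edgeSet (X : SSet) : Letter → Set (X _⦋1⦌) := fun l => match l with
  | .z => Set.range (X.σ (0 : Fin 1))
  | .o => Set.univ
  | .a => (Set.range (X.σ (0 : Fin 1)))ᶜ

/-- `X_w`, the set of `n`-simplices whose principal edges have the types
prescribed by the word `w`. -/
def wordSet (X : SSet) {n : ℕ} (w : Fin n → Letter) : Set (X _⦋n⦌) :=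
  {σ | ∀ i : Fin n, X.map (principalEdge n i).op σ ∈ edgeSet X (w i)}

/-- A simplex is *effective* if all its principal edges are nondegenerate. -/
def Effective (X : SSet) {n : ℕ} (σ : X _⦋n⦌) : Prop :=
  ∀ i : Fin n, X.map (principalEdge n i).op σ ∉ Set.range (X.σ (0 : Fin 1))

/-- The constant word `aa⋯a`. -/
def allA (n : ℕ) : Fin n → Letter := fun _ => Letter.a

/-- Concatenation of words. -/
def concatW {m n : ℕ} (v : Fin m → Letter) (v' : Fin n → Letter) : Fin (m + n) → Letter :=
  fun i => if h : i.1 < m then v ⟨i.1, h⟩ else v' ⟨i.1 - m, by have := i.2; omega⟩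

/-- The word `v ℓ v'` obtained by splicing a letter `ℓ` between the words `v` and `v'`. -/
def splice {m n : ℕ} (v : Fin m → Letter) (l : Letter) (v' : Fin n → Letter) :
    Fin (m + n + 1) → Letter :=
  fun i => if h : i.1 < m then v ⟨i.1, h⟩
    else if h2 : i.1 = m then l
    else v' ⟨i.1 - (m + 1), by have := i.2; omega⟩

/-- A simplex (of positive dimension) is degenerate if it is in the image of some
degeneracy map. -/
def Degen (X : SSet) {n : ℕ} (σ : X _⦋n + 1⦌) : Prop :=
  ∃ i : Fin (n + 1), σ ∈ Set.range (X.σ i)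

/-- A simplicial map is *cULF* if its naturality squares on all generic maps are
pullbacks. -/
def IsCULF {Y X : SSet} (f : Y ⟶ X) : Prop :=
  ∀ ⦃a b : SimplexCategory⦄ (g : a ⟶ b), IsGeneric g →
    IsPullback (f.app (op b)) (Y.map g.op) (X.map g.op) (f.app (op a))

/-- A simplicial map is *conservative* if its naturality squares on all degeneracy
maps are pullbacks. -/
def Conservative {Y X : SSet} (f : Y ⟶ X) : Prop :=
  ∀ (n : ℕ) (i : Fin (n + 1)),
    IsPullback (f.app (op (SimplexCategory.mk n))) (Y.σ i) (X.σ i)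
      (f.app (op (SimplexCategory.mk (n + 1))))

/-- A simplicial set is *stiff* if it carries every pushout in `Δ` of a codegeneracy
map along a free map to a pullback of sets. -/
def Stiff (X : SSet) : Prop :=
  ∀ (k : ℕ) (i : Fin (k + 1)) ⦃c d : SimplexCategory⦄
    (f : SimplexCategory.mk (k + 1) ⟶ c) (h : SimplexCategory.mk k ⟶ d) (j : c ⟶ d),
    IsFree f → IsPushout (SimplexCategory.σ i) f h j →
    IsPullback (X.map h.op) (X.map j.op) (X.map (SimplexCategory.σ i).op) (X.map f.op)

/-- The map `[0] → [n]` picking out the vertex `i`. -/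
def vertexMap (n : ℕ) (i : Fin (n + 1)) : (⦋0⦌ : SimplexCategory) ⟶ ⦋n⦌ :=
  SimplexCategory.mkHom ⟨fun _ => i, fun _ _ _ => le_refl _⟩

/-- The unique map `[n] → [0]`; it induces the iterated degeneracy `X₀ → Xₙ`. -/
def toZero (n : ℕ) : (⦋n⦌ : SimplexCategory) ⟶ ⦋0⦌ :=
  SimplexCategory.mkHom ⟨fun _ => 0, fun _ _ _ => le_refl _⟩

/-- The generic map `[2] → [m+n]` sending `0,1,2` to `0,m,m+n`. -/
def midMap (m n : ℕ) : (⦋2⦌ : SimplexCategory) ⟶ ⦋m + n⦌ :=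
  SimplexCategory.mkHom
    { toFun := fun j => ⟨if j.1 = 0 then 0 else if j.1 = 1 then m else m + n, by
        split
        · omega
        · split <;> omega⟩
      monotone' := by
        intro a b hab
        have h : a.1 ≤ b.1 := hab
        have ha := a.2
        have hb := b.2
        simp only [Fin.mk_le_mk]
        split <;> split <;> (try split) <;> (try split) <;> omega }

/-- The free map `[m] → [m+n]` onto the initial segment. -/
def freeInitial (m n : ℕ) : (⦋m⦌ : SimplexCategory) ⟶ ⦋m + n⦌ :=
  SimplexCategory.mkHom ⟨fun i => ⟨i.1, by have := i.2; omega⟩, fun a b h => h⟩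

/-- The free map `[n] → [m+n]` onto the final segment. -/
def freeFinal (m n : ℕ) : (⦋n⦌ : SimplexCategory) ⟶ ⦋m + n⦌ :=
  SimplexCategory.mkHom ⟨fun i => ⟨m + i.1, by have := i.2; omega⟩,
    fun a b h => by
      simp only [Fin.mk_le_mk]
      exact Nat.add_le_add_left h m⟩

/-- The word `1aa⋯a` (`n` letters `a`). -/
def oneA (n : ℕ) : Fin (n + 1) → Letter := fun i => if i.1 = 0 then Letter.o else Letter.a

/-- The word `0aa⋯a` (`n` letters `a`). -/
def zeroA (n : ℕ) : Fin (n + 1) → Letter := fun i => if i.1 = 0 then Letter.z else Letter.a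

/-- The word `aa⋯a1` (`n` letters `a`). -/
def aOne (n : ℕ) : Fin (n + 1) → Letter := fun i => if i.1 = n then Letter.o else Letter.a

/-- The word `aa⋯a0` (`n` letters `a`). -/
def aZero (n : ℕ) : Fin (n + 1) → Letter := fun i => if i.1 = n then Letter.z else Letter.a

/-- The number of letters `0` in a word. -/
def zcount {n : ℕ} (w : Fin n → Letter) : ℕ :=
  (Finset.univ.filter fun i => w i = Letter.z).card

/-- The surjection `[n] → [n - zcount w]` collapsing, for each position `j` with
`w j = 0`, the vertex `j+1` onto the vertex `j`; the induced map
`X_{n - zcount w} → X_n` is the iterated degeneracy `s_{j_k} ⋯ s_{j_1}` where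
`j_1 < ⋯ < j_k` are the positions of the letters `0` of `w`. -/
def collapseMap {n : ℕ} (w : Fin n → Letter) :
    (⦋n⦌ : SimplexCategory) ⟶ ⦋n - zcount w⦌ :=
  SimplexCategory.mkHom
    { toFun := fun t =>
        ⟨(Finset.univ.filter fun i : Fin n => i.1 < t.1 ∧ ¬ (w i = Letter.z)).card, by
          have h2 := Finset.card_filter_add_card_filter_not
            (s := (Finset.univ : Finset (Fin n))) (p := fun i => w i = Letter.z)
          have h1 : (Finset.univ.filter fun i : Fin n => i.1 < t.1 ∧ ¬ (w i = Letter.z)).card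
              ≤ (Finset.univ.filter fun i : Fin n => ¬ (w i = Letter.z)).card :=
            Finset.card_le_card (fun x hx => by
              simp only [Finset.mem_filter] at hx ⊢
              exact ⟨hx.1, hx.2.2⟩)
          have h3 : zcount w = (Finset.univ.filter fun i : Fin n => w i = Letter.z).card := rfl
          simp only [Finset.card_univ, Fintype.card_fin] at h2
          omega⟩
      monotone' := by
        intro a b hab
        have h : a.1 ≤ b.1 := hab
        simp only [Fin.mk_le_mk]
        exact Finset.card_le_card (fun x hx => by
          simp only [Finset.mem_filter] at hx ⊢
          exact ⟨hx.1, lt_of_lt_of_le hx.2.1 h, hx.2.2⟩) }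

/-- An edge has finite length if there is a bound on the dimensions of the effective
simplices having it as long edge. -/
def FiniteLength (X : SSet) (a : X _⦋1⦌) : Prop :=
  ∃ N : ℕ, ∀ (n : ℕ) (σ : X _⦋n⦌), Effective X σ →
    X.map (longEdgeMap n).op σ = a → n ≤ N

/-- A *tight* decomposition space: a complete decomposition space in which every edge
has finite length. -/
def Tight (X : SSet) : Prop :=
  IsDecomposition X ∧ Function.Injective (X.σ (0 : Fin 1) : X _⦋0⦌ ⟶ X _⦋1⦌) ∧
    ∀ a : X _⦋1⦌, FiniteLength X a

/-- The length of an edge: the supremum of the dimensions of effective simplices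
having it as long edge. -/
noncomputable def edgeLength (X : SSet) (a : X _⦋1⦌) : ℕ :=
  sSup (Set.ofPred fun n : ℕ => ∃ σ : X _⦋n⦌, Effective X σ ∧ X.map (longEdgeMap n).op σ = a)

/-- A complete simplicial set is *split* if all face maps preserve nondegenerate
simplices. -/
def Split (X : SSet) : Prop :=
  Complete X ∧ ∀ (n : ℕ) (i : Fin (n + 3)) (σ : X _⦋n + 2⦌),
    ¬ Degen X σ → ¬ Degen X (X.δ i σ)

/-- The counit: the indicator function of the degenerate edges. -/
noncomputable def epsFun (X : SSet) : X _⦋1⦌ → ℚ := fun f =>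
  haveI := Classical.propDecidable (f ∈ Set.range (X.σ (0 : Fin 1)))
  if f ∈ Set.range (X.σ (0 : Fin 1)) then 1 else 0

/-- Convolution product on `ℚ`-valued functions on `X₁`. -/
noncomputable def convFun (X : SSet) (φ ψ : X _⦋1⦌ → ℚ) : X _⦋1⦌ → ℚ :=
  fun f => ∑ᶠ σ ∈ (fun τ => X.δ (1 : Fin 3) τ) ⁻¹' {f},
    φ (X.δ (2 : Fin 3) σ) * ψ (X.δ (0 : Fin 3) σ)

/-- The Möbius function `Φ_even - Φ_odd`. -/
noncomputable def muFun (X : SSet) : X _⦋1⦌ → ℚ :=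
  fun f => ∑ᶠ n : ℕ, (-1 : ℚ) ^ n *
    (Nat.card {σ : X.obj (op (SimplexCategory.mk n)) // Effective X σ ∧ X.map (longEdgeMap n).op σ = f} : ℚ)

/-- The category `Δ_inj`: objects those of the simplex category, morphisms the
injective monotone maps. -/
structure DeltaInj : Type where
  /-- the underlying object of the simplex category -/
  obj : SimplexCategory

instance : Category DeltaInj where
  Hom a b := {f : a.obj ⟶ b.obj // Function.Injective f.toOrderHom}
  id a := ⟨𝟙 a.obj, by
    rw [SimplexCategory.id_toOrderHom]
    exact fun x y h => h⟩
  comp f g := ⟨f.1 ≫ g.1, by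
    rw [SimplexCategory.comp_toOrderHom]
    exact fun x y h => f.2 (g.2 h)⟩
  id_comp f := by apply Subtype.ext; simp
  comp_id f := by apply Subtype.ext; simp
  assoc f g h := by apply Subtype.ext; simp

/-- The inclusion functor `Δ_inj ⊆ Δ`. -/
def DeltaInj.incl : DeltaInj ⥤ SimplexCategory where
  obj a := a.obj
  map f := f.1

/-- A *semi-decomposition space*: a semi-simplicial set carrying every pushout in
`Δ_inj` of a generic (inner) face map along a free (outer) face map to a pullback. -/
def IsSemiDecomposition (Z : DeltaInjᵒᵖ ⥤ Type) : Prop :=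
  ∀ ⦃a b c d : DeltaInj⦄ (g : a ⟶ b) (f : a ⟶ c) (h : b ⟶ d) (k : c ⟶ d),
    IsGeneric g.1 → IsFree f.1 → IsPushout g f h k →
    IsPullback (Z.map h.op) (Z.map k.op) (Z.map g.op) (Z.map f.op)

/-- A map of semi-simplicial sets is *ULF* if its naturality squares on all generic
face maps are pullbacks. -/
def IsULF {Z W : DeltaInjᵒᵖ ⥤ Type} (φ : Z ⟶ W) : Prop :=
  ∀ ⦃a b : DeltaInj⦄ (g : a ⟶ b), IsGeneric g.1 →
    IsPullback (φ.app (op b)) (Z.map g.op) (W.map g.op) (φ.app (op a))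

lemma conservative_id (X : SSet) : Conservative (𝟙 X) := by
  intro n i
  exact IsPullback.of_horiz_isIso ⟨by simp⟩

lemma conservative_comp {X Y Z : SSet} {f : X ⟶ Y} {g : Y ⟶ Z}
    (hf : Conservative f) (hg : Conservative g) : Conservative (f ≫ g) := by
  intro n i
  simpa using IsPullback.paste_horiz (hf n i) (hg n i)

lemma isCULF_id (X : SSet) : IsCULF (𝟙 X) := by
  intro a b gm hgm
  exact IsPullback.of_horiz_isIso ⟨by simp⟩

lemma isCULF_comp {X Y Z : SSet} {f : X ⟶ Y} {g : Y ⟶ Z}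
    (hf : IsCULF f) (hg : IsCULF g) : IsCULF (f ≫ g) := by
  intro a b gm hgm
  simpa using IsPullback.paste_horiz (hf gm hgm) (hg gm hgm)

lemma isULF_id (Z : DeltaInjᵒᵖ ⥤ Type) : IsULF (𝟙 Z) := by
  intro a b gm hgm
  exact IsPullback.of_horiz_isIso ⟨by simp⟩

lemma isULF_comp {X Y Z : DeltaInjᵒᵖ ⥤ Type} {f : X ⟶ Y} {g : Y ⟶ Z}
    (hf : IsULF f) (hg : IsULF g) : IsULF (f ≫ g) := by
  intro a b gm hgm
  simpa using IsPullback.paste_horiz (hf gm hgm) (hg gm hgm)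

/-- The category of split simplicial sets and conservative maps. -/
structure SplitSSet : Type 1 where
  /-- the underlying simplicial set -/
  X : SSet.{0}
  split : Split X

instance : Category SplitSSet where
  Hom A B := {f : A.X ⟶ B.X // Conservative f}
  id A := ⟨𝟙 A.X, conservative_id A.X⟩
  comp f g := ⟨f.1 ≫ g.1, conservative_comp f.2 g.2⟩
  id_comp f := by apply Subtype.ext; simp
  comp_id f := by apply Subtype.ext; simp
  assoc f g h := by apply Subtype.ext; simp

/-- The forgetful functor from split simplicial sets to simplicial sets. -/
def SplitSSet.forget : SplitSSet ⥤ SSet where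
  obj A := A.X
  map f := f.1

/-- The category of split decomposition spaces and cULF maps. -/
structure SplitDecomp : Type 1 where
  /-- the underlying simplicial set -/
  X : SSet.{0}
  split : Split X
  decomp : IsDecomposition X

instance : Category SplitDecomp where
  Hom A B := {f : A.X ⟶ B.X // IsCULF f}
  id A := ⟨𝟙 A.X, isCULF_id A.X⟩
  comp f g := ⟨f.1 ≫ g.1, isCULF_comp f.2 g.2⟩
  id_comp f := by apply Subtype.ext; simp
  comp_id f := by apply Subtype.ext; simp
  assoc f g h := by apply Subtype.ext; simp

/-- The forgetful functor from split decomposition spaces to simplicial sets. -/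
def SplitDecomp.forget : SplitDecomp ⥤ SSet where
  obj A := A.X
  map f := f.1

/-- The category of semi-decomposition spaces and ULF maps. -/
structure SemiDecomp : Type 1 where
  /-- the underlying semi-simplicial set -/
  Z : DeltaInjᵒᵖ ⥤ Type
  semidecomp : IsSemiDecomposition Z

instance : Category SemiDecomp where
  Hom A B := {φ : A.Z ⟶ B.Z // IsULF φ}
  id A := ⟨𝟙 A.Z, isULF_id A.Z⟩
  comp f g := ⟨f.1 ≫ g.1, isULF_comp f.2 g.2⟩
  id_comp f := by apply Subtype.ext; simp
  comp_id f := by apply Subtype.ext; simp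
  assoc f g h := by apply Subtype.ext; simp

/-- The forgetful functor from semi-decomposition spaces to semi-simplicial sets. -/
def SemiDecomp.forget : SemiDecomp ⥤ (DeltaInjᵒᵖ ⥤ Type) where
  obj A := A.Z
  map f := f.1

namespace Aux

lemma hom_ext {a b : SimplexCategory} {f g : a ⟶ b}
    (h : ∀ t, (f.toOrderHom t : ℕ) = (g.toOrderHom t : ℕ)) : f = g :=
  SimplexCategory.Hom.ext _ _ (OrderHom.ext _ _ (funext fun t => Fin.ext (h t)))

lemma comp_apply {a b c : SimplexCategory} (f : a ⟶ b) (g : b ⟶ c) (t : Fin (a.len + 1)) :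
    (f ≫ g).toOrderHom t = g.toOrderHom (f.toOrderHom t) := by
  rw [SimplexCategory.comp_toOrderHom]; rfl

lemma sigma_val {q : ℕ} (i : Fin (q + 1)) (t : Fin (q + 2)) :
    ((SimplexCategory.σ i).toOrderHom t : ℕ) = if i.1 < t.1 then t.1 - 1 else t.1 := by
  show (Fin.predAbove i t : ℕ) = _
  unfold Fin.predAbove
  split_ifs with h1 h2 h3
  · rfl
  · exact absurd (by rw [Fin.lt_def] at h1; simpa using h1) h2
  · exact absurd (by rw [Fin.lt_def]; simpa using h3) h1
  · rfl

lemma delta_val {q : ℕ} (i : Fin (q + 2)) (t : Fin (q + 1)) :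
    ((SimplexCategory.δ i).toOrderHom t : ℕ) = if t.1 < i.1 then t.1 else t.1 + 1 := by
  show (Fin.succAbove i t : ℕ) = _
  unfold Fin.succAbove
  split_ifs with h1 h2 h3
  · rfl
  · exact absurd (by rw [Fin.lt_def] at h1; simpa using h1) h2
  · exact absurd (by rw [Fin.lt_def]; simpa using h3) h1
  · rfl

/-- ℕ-valued evaluation of a map out of `[p]`. -/
def evn {p : ℕ} {b : SimplexCategory} (f : (SimplexCategory.mk p) ⟶ b) (t : ℕ) : ℕ :=
  (f.toOrderHom ⟨t % (p + 1), Nat.mod_lt _ p.succ_pos⟩ : ℕ)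

lemma evn_lt {p : ℕ} {b : SimplexCategory} (f : (SimplexCategory.mk p) ⟶ b) (t : ℕ) :
    evn f t < b.len + 1 := (f.toOrderHom _).2

lemma evn_of_lt {p : ℕ} {b : SimplexCategory} (f : (SimplexCategory.mk p) ⟶ b) {t : ℕ}
    (ht : t < p + 1) (hpf : t < SimplexCategory.len (SimplexCategory.mk p) + 1) :
    evn f t = (f.toOrderHom ⟨t, hpf⟩ : ℕ) := by
  unfold evn
  congr 2
  exact Fin.ext (Nat.mod_eq_of_lt ht)

lemma evn_eval {p : ℕ} {b : SimplexCategory} (f : (SimplexCategory.mk p) ⟶ b)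
    (t : Fin (SimplexCategory.len (SimplexCategory.mk p) + 1)) :
    (f.toOrderHom t : ℕ) = evn f t.1 := by
  rw [evn_of_lt f (t.2 : t.1 < p + 1) t.2]

lemma hom_ext_n {p : ℕ} {b : SimplexCategory} {f g : (SimplexCategory.mk p) ⟶ b}
    (h : ∀ t : ℕ, t < p + 1 → evn f t = evn g t) : f = g := by
  apply hom_ext
  intro t
  rw [evn_eval, evn_eval]
  exact h t.1 (t.2 : t.1 < p + 1)

lemma evn_comp {p q : ℕ} {c : SimplexCategory} (f : (SimplexCategory.mk p) ⟶ (SimplexCategory.mk q))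
    (g : (SimplexCategory.mk q) ⟶ c) {t : ℕ} (ht : t < p + 1) :
    evn (f ≫ g) t = evn g (evn f t) := by
  have h1 : evn f t < q + 1 := evn_lt f t
  unfold evn
  rw [comp_apply]
  congr 2
  apply Fin.ext
  show _ = evn f t % (q + 1)
  rw [Nat.mod_eq_of_lt h1]
  rfl

lemma evn_congr {p : ℕ} {b : SimplexCategory} {f g : (SimplexCategory.mk p) ⟶ b}
    (h : f = g) (t : ℕ) : evn f t = evn g t := by rw [h]

lemma evn_σ {q iv : ℕ} (hq : iv < q + 1) {t : ℕ} (ht : t < q + 2) :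
    evn (SimplexCategory.σ (⟨iv, hq⟩ : Fin (q + 1))) t = if iv < t then t - 1 else t := by
  rw [evn_of_lt _ ht (ht : t < SimplexCategory.len (SimplexCategory.mk (q+1)) + 1)]
  exact sigma_val ⟨iv, hq⟩ ⟨t, ht⟩

lemma evn_δ {q iv : ℕ} (hq : iv < q + 2) {t : ℕ} (ht : t < q + 1) :
    evn (SimplexCategory.δ (⟨iv, hq⟩ : Fin (q + 2))) t = if t < iv then t else t + 1 := by
  rw [evn_of_lt _ ht (ht : t < SimplexCategory.len (SimplexCategory.mk q) + 1)]
  exact delta_val ⟨iv, hq⟩ ⟨t, ht⟩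

/-- The free map `[k] → [n]`, `t ↦ m + t`. -/
def intervalMap (k m n : ℕ) (h : m + k ≤ n) : (SimplexCategory.mk k) ⟶ (SimplexCategory.mk n) :=
  SimplexCategory.mkHom
    { toFun := fun t => ⟨m + t.1, by have := t.2; omega⟩
      monotone' := fun a b hab => by
        simp only [Fin.mk_le_mk]
        exact Nat.add_le_add_left hab m }

lemma evn_intervalMap {k m n : ℕ} (h : m + k ≤ n) {t : ℕ} (ht : t < k + 1) :
    evn (intervalMap k m n h) t = m + t := by
  rw [evn_of_lt _ ht (ht : t < SimplexCategory.len (SimplexCategory.mk k) + 1)]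
  rfl

lemma delta_sigma_id (q : ℕ) {iv : ℕ} (hq : iv < q + 1) :
    SimplexCategory.δ (⟨iv, by omega⟩ : Fin (q + 2)) ≫ SimplexCategory.σ (⟨iv, hq⟩ : Fin (q + 1)) =
      𝟙 (SimplexCategory.mk q) := by
  apply hom_ext_n
  intro t ht
  rw [evn_comp _ _ ht]
  have h1 := evn_δ (by omega : iv < q + 2) ht
  rw [h1]
  have h2 : evn (𝟙 (SimplexCategory.mk q)) t = t := by
    rw [evn_of_lt _ ht (ht : t < SimplexCategory.len (SimplexCategory.mk q) + 1)]
    rw [SimplexCategory.id_toOrderHom]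
    rfl
  rw [h2]
  by_cases hc : t < iv
  · rw [if_pos hc, evn_σ hq (by omega)]
    simp; omega
  · rw [if_neg hc, evn_σ hq (by omega)]
    simp; omega


lemma interval_pushout (k iv m n : ℕ) (hik : iv < k + 1) (h : m + k ≤ n) :
    IsPushout (SimplexCategory.σ (⟨iv, hik⟩ : Fin (k + 1)))
      (intervalMap (k + 1) m (n + 1) (by omega))
      (intervalMap k m n h)
      (SimplexCategory.σ (⟨m + iv, by omega⟩ : Fin (n + 1))) := by
  have w : SimplexCategory.σ (⟨iv, hik⟩ : Fin (k + 1)) ≫ intervalMap k m n h =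
      intervalMap (k + 1) m (n + 1) (by omega) ≫
        SimplexCategory.σ (⟨m + iv, by omega⟩ : Fin (n + 1)) := by
    apply hom_ext_n
    intro t ht
    rw [evn_comp _ _ ht, evn_comp _ _ ht]
    rw [evn_σ hik ht, evn_intervalMap _ ht]
    have hσ : evn (SimplexCategory.σ (⟨m + iv, by omega⟩ : Fin (n + 1))) (m + t)
        = if m + iv < m + t then m + t - 1 else m + t := evn_σ (by omega) (by omega)
    rw [hσ]
    by_cases hc : iv < t
    · rw [if_pos hc, if_pos (by omega), evn_intervalMap _ (by omega)]
      omega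
    · rw [if_neg hc, if_neg (by omega), evn_intervalMap _ (by omega)]
  refine IsPushout.of_isColimit' ⟨w⟩ ?_
  refine PushoutCocone.IsColimit.mk w
    (fun s => SimplexCategory.δ (⟨m + iv, by omega⟩ : Fin (n + 2)) ≫ s.inr) ?_ ?_ ?_
  · -- fac left : intervalMap k m n h ≫ (δ ≫ s.inr) = s.inl
    intro s
    have hcond : ∀ t : ℕ, t < k + 2 →
        evn s.inl (evn (SimplexCategory.σ (⟨iv, hik⟩ : Fin (k + 1))) t)
          = evn s.inr (evn (intervalMap (k + 1) m (n + 1) (by omega)) t) := by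
      intro t ht
      have := evn_congr s.condition t
      rw [evn_comp _ _ ht, evn_comp _ _ ht] at this
      exact this
    apply hom_ext_n
    intro t ht
    rw [← Category.assoc, evn_comp _ _ ht, evn_comp _ _ ht, evn_intervalMap _ ht]
    have hδ : evn (SimplexCategory.δ (⟨m + iv, by omega⟩ : Fin (n + 2))) (m + t)
        = if m + t < m + iv then m + t else m + t + 1 := evn_δ (by omega) (by omega)
    rw [hδ]
    by_cases hc : t < iv
    · rw [if_pos (by omega)]
      have := hcond t (by omega)
      rw [evn_σ hik (by omega), if_neg (by omega), evn_intervalMap _ (by omega)] at this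
      exact this.symm
    · rw [if_neg (by omega)]
      have := hcond (t + 1) (by omega)
      rw [evn_σ hik (by omega), if_pos (by omega), evn_intervalMap _ (by omega)] at this
      simp only [Nat.add_sub_cancel] at this
      rw [show m + t + 1 = m + (t + 1) by omega]
      exact this.symm
  · -- fac right : σ⟨m+iv⟩ ≫ (δ ≫ s.inr) = s.inr
    intro s
    have hcond : ∀ t : ℕ, t < k + 2 →
        evn s.inl (evn (SimplexCategory.σ (⟨iv, hik⟩ : Fin (k + 1))) t)
          = evn s.inr (evn (intervalMap (k + 1) m (n + 1) (by omega)) t) := by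
      intro t ht
      have := evn_congr s.condition t
      rw [evn_comp _ _ ht, evn_comp _ _ ht] at this
      exact this
    apply hom_ext_n
    intro t ht
    rw [← Category.assoc, evn_comp _ _ ht, evn_comp _ _ ht]
    rw [evn_σ (show m + iv < n + 1 by omega) ht]
    by_cases hc : t = m + iv
    · -- collapsed vertex
      rw [if_neg (by omega)]
      have hδ : evn (SimplexCategory.δ (⟨m + iv, by omega⟩ : Fin (n + 2))) t
          = if t < m + iv then t else t + 1 := evn_δ (by omega) (by omega)
      rw [hδ, if_neg (by omega)]
      -- goal : evn s.inr (t + 1) = evn s.inr t, t = m + iv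
      have h1 := hcond iv (by omega)
      have h2 := hcond (iv + 1) (by omega)
      rw [evn_σ hik (by omega), if_neg (by omega), evn_intervalMap _ (by omega)] at h1
      rw [evn_σ hik (by omega), if_pos (by omega), evn_intervalMap _ (by omega)] at h2
      simp only [Nat.add_sub_cancel] at h2
      rw [h1] at h2
      subst hc
      rw [show m + iv + 1 = m + (iv + 1) by omega]
      exact h2.symm
    · by_cases hc2 : m + iv < t
      · rw [if_pos hc2]
        have hδ : evn (SimplexCategory.δ (⟨m + iv, by omega⟩ : Fin (n + 2))) (t - 1)
            = if t - 1 < m + iv then t - 1 else t - 1 + 1 := evn_δ (by omega) (by omega)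
        rw [hδ, if_neg (by omega)]
        congr 1
        omega
      · rw [if_neg hc2]
        have hδ : evn (SimplexCategory.δ (⟨m + iv, by omega⟩ : Fin (n + 2))) t
            = if t < m + iv then t else t + 1 := evn_δ (by omega) (by omega)
        rw [hδ, if_pos (by omega)]
  · -- uniqueness
    intro s u hl hr
    have hid : SimplexCategory.δ (⟨m + iv, by omega⟩ : Fin (n + 2)) ≫
        SimplexCategory.σ (⟨m + iv, by omega⟩ : Fin (n + 1)) = 𝟙 (SimplexCategory.mk n) :=
      delta_sigma_id n (by omega)
    calc u = (SimplexCategory.δ (⟨m + iv, by omega⟩ : Fin (n + 2)) ≫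
        SimplexCategory.σ (⟨m + iv, by omega⟩ : Fin (n + 1))) ≫ u := by
          rw [hid, Category.id_comp]
    _ = SimplexCategory.δ (⟨m + iv, by omega⟩ : Fin (n + 2)) ≫ s.inr := by
          rw [Category.assoc, hr]


universe u

lemma typeIsPullback_mk {P X Y Z : Type u} {fst : P ⟶ X} {snd : P ⟶ Y} {f : X ⟶ Z} {g : Y ⟶ Z}
    (w : fst ≫ f = snd ≫ g)
    (inj : ∀ p q : P, snd p = snd q → p = q)
    (surj : ∀ (x : X) (y : Y), f x = g y → ∃ p, fst p = x ∧ snd p = y) :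
    IsPullback fst snd f g := by
  refine IsPullback.of_isLimit' ⟨w⟩ ?_
  refine (PullbackCone.isLimitEquivBijective _).symm ?_
  constructor
  · intro p q hpq
    exact inj p q (congrArg (fun z => z.1.2) hpq)
  · rintro ⟨⟨x, y⟩, hxy⟩
    obtain ⟨p, h1, h2⟩ := surj x y hxy
    exact ⟨p, Subtype.ext (Prod.ext h1 h2)⟩

lemma typeIsPullback_exists {P X Y Z : Type u} {fst : P ⟶ X} {snd : P ⟶ Y} {f : X ⟶ Z}
    {g : Y ⟶ Z} (h : IsPullback fst snd f g) (x : X) (y : Y) (hxy : f x = g y) :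
    ∃ p, fst p = x ∧ snd p = y := by
  obtain ⟨p, hp⟩ := (PullbackCone.IsLimit.equivPullbackObj h.isLimit).surjective ⟨⟨x, y⟩, hxy⟩
  refine ⟨p, ?_, ?_⟩
  · exact (PullbackCone.IsLimit.equivPullbackObj_apply_fst h.isLimit p).symm.trans
      (congrArg (fun z => z.1.1) hp)
  · exact (PullbackCone.IsLimit.equivPullbackObj_apply_snd h.isLimit p).symm.trans
      (congrArg (fun z => z.1.2) hp)

lemma Xmap_comp (X : SSet.{u}) {a b c : SimplexCategory} (f : a ⟶ b) (g : b ⟶ c)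
    (x : X.obj (Opposite.op c)) : X.map (f ≫ g).op x = X.map f.op (X.map g.op x) := by
  rw [op_comp, X.map_comp]; rfl

lemma Xmap_section_inj (X : SSet.{u}) {a b : SimplexCategory} (u' : a ⟶ b) (r : b ⟶ a)
    (hru : r ≫ u' = 𝟙 b) : Function.Injective (X.map u'.op) := by
  intro x y hxy
  have key : ∀ z : X.obj (Opposite.op b), X.map r.op (X.map u'.op z) = z := by
    intro z
    rw [← Xmap_comp X r u' z, hru, op_id, X.map_id]
    rfl
  rw [← key x, ← key y, hxy]



lemma evn_principalEdge {n : ℕ} (i : Fin n) {t : ℕ} (ht : t < 2) :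
    evn (principalEdge n i) t = i.1 + t := by
  rw [evn_of_lt _ ht (ht : t < SimplexCategory.len (SimplexCategory.mk 1) + 1)]
  rfl

lemma evn_vertexMap {n : ℕ} (i : Fin (n + 1)) {t : ℕ} (ht : t < 1) :
    evn (vertexMap n i) t = i.1 := by
  rw [evn_of_lt _ ht (ht : t < SimplexCategory.len (SimplexCategory.mk 0) + 1)]
  rfl

lemma fact_A {k iv m n : ℕ} (hik : iv < k + 1) (hmn : m + k ≤ n) :
    principalEdge (n + 1) (⟨m + iv, by omega⟩ : Fin (n + 1)) =
      principalEdge (k + 1) (⟨iv, hik⟩ : Fin (k + 1)) ≫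
        intervalMap (k + 1) m (n + 1) (by omega) := by
  apply hom_ext_n
  intro t ht
  rw [evn_comp _ _ ht, evn_principalEdge _ ht, evn_principalEdge _ ht,
    evn_intervalMap _ (by omega)]
  show m + iv + t = m + (iv + t)
  omega

lemma fact_B {k iv : ℕ} (hik : iv < k + 1) :
    principalEdge (k + 1) (⟨iv, hik⟩ : Fin (k + 1)) ≫ SimplexCategory.σ (⟨iv, hik⟩ : Fin (k + 1)) =
      SimplexCategory.σ (0 : Fin 1) ≫ vertexMap k (⟨iv, hik⟩ : Fin (k + 1)) := by
  apply hom_ext_n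
  intro t ht
  have hivv : ((⟨iv, hik⟩ : Fin (k + 1)) : ℕ) = iv := rfl
  have e0 : (0 : Fin 1) = ⟨0, by omega⟩ := rfl
  rw [evn_comp _ _ ht, evn_comp _ _ ht, evn_principalEdge _ ht, evn_σ hik (by omega),
    e0, evn_σ (by omega) (by omega : t < 0 + 2)]
  interval_cases t
  · rw [if_neg (by omega), if_neg (by omega), evn_vertexMap _ (by omega)]
    omega
  · rw [if_pos (by omega), if_pos (by omega), evn_vertexMap _ (by omega)]
    omega

lemma fact_C {k iv m n : ℕ} (hik : iv < k + 1) (hmn : m + k ≤ n) :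
    vertexMap n (⟨m + iv, by omega⟩ : Fin (n + 1)) =
      vertexMap k (⟨iv, hik⟩ : Fin (k + 1)) ≫ intervalMap k m n hmn := by
  apply hom_ext_n
  intro t ht
  rw [evn_comp _ _ ht, evn_vertexMap _ ht, evn_vertexMap _ ht, evn_intervalMap _ (by omega)]

lemma key (X : SSet.{u})
    (H : ∀ (n : ℕ) (i : Fin (n + 1)),
      IsPullback (X.σ i) (X.map (vertexMap n i).op)
        (X.map (principalEdge (n + 1) i).op) (X.σ (0 : Fin 1)))
    (k iv m n : ℕ) (hik : iv < k + 1) (hmn : m + k ≤ n) :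
    IsPullback (X.map (intervalMap k m n hmn).op)
      (X.map (SimplexCategory.σ (⟨m + iv, by omega⟩ : Fin (n + 1))).op)
      (X.map (SimplexCategory.σ (⟨iv, hik⟩ : Fin (k + 1))).op)
      (X.map (intervalMap (k + 1) m (n + 1) (by omega)).op) := by
  have hpw := (interval_pushout k iv m n hik hmn).w
  apply typeIsPullback_mk
  · rw [← X.map_comp, ← X.map_comp, ← op_comp, ← op_comp, hpw]
  · intro p q hpq
    exact Xmap_section_inj X (SimplexCategory.σ (⟨m + iv, by omega⟩ : Fin (n + 1)))
      (SimplexCategory.δ (⟨m + iv, by omega⟩ : Fin (n + 2)))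
      (delta_sigma_id n (by omega)) hpq
  · intro τ ρ hcomp
    set x0 := X.map (vertexMap k (⟨iv, hik⟩ : Fin (k + 1))).op τ with hx0
    have hpe : X.map (principalEdge (n + 1) (⟨m + iv, by omega⟩ : Fin (n + 1))).op ρ =
        X.σ (0 : Fin 1) x0 := by
      rw [fact_A hik hmn, Xmap_comp, ← hcomp, ← Xmap_comp, fact_B hik, Xmap_comp]
      rfl
    obtain ⟨ξ, hξ1, hξ2⟩ := typeIsPullback_exists (H n ⟨m + iv, by omega⟩) ρ x0 hpe
    refine ⟨ξ, ?_, hξ1⟩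
    apply Xmap_section_inj X (SimplexCategory.σ (⟨iv, hik⟩ : Fin (k + 1)))
      (SimplexCategory.δ (⟨iv, by omega⟩ : Fin (k + 2))) (delta_sigma_id k hik)
    calc X.map (SimplexCategory.σ (⟨iv, hik⟩ : Fin (k + 1))).op
          (X.map (intervalMap k m n hmn).op ξ)
        = X.map (SimplexCategory.σ (⟨iv, hik⟩ : Fin (k + 1)) ≫ intervalMap k m n hmn).op ξ :=
          (Xmap_comp X _ _ ξ).symm
      _ = X.map (intervalMap (k + 1) m (n + 1) (by omega) ≫
            SimplexCategory.σ (⟨m + iv, by omega⟩ : Fin (n + 1))).op ξ := by rw [hpw]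
      _ = X.map (intervalMap (k + 1) m (n + 1) (by omega)).op
            (X.map (SimplexCategory.σ (⟨m + iv, by omega⟩ : Fin (n + 1))).op ξ) :=
          Xmap_comp X _ _ ξ
      _ = X.map (intervalMap (k + 1) m (n + 1) (by omega)).op ρ := by
            exact congrArg _ hξ1
      _ = X.map (SimplexCategory.σ (⟨iv, hik⟩ : Fin (k + 1))).op τ := hcomp.symm

end Aux

theorem statement9 (X : SSet) :
    Stiff X ↔ ∀ (n : ℕ) (i : Fin (n + 1)),
      IsPullback (X.σ i) (X.map (vertexMap n i).op)
        (X.map (principalEdge (n + 1) i).op) (X.σ (0 : Fin 1)) := by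
  constructor
  · -- Stiff → squares
    intro hst n i
    have hfree : IsFree (principalEdge (n + 1) i) := fun t => rfl
    have hp0 := Aux.interval_pushout 0 0 i.1 n (by omega) (by omega)
    have eA : Aux.intervalMap (0 + 1) i.1 (n + 1) (by omega) = principalEdge (n + 1) i := by
      apply Aux.hom_ext_n
      intro t ht
      rw [Aux.evn_intervalMap _ ht, Aux.evn_principalEdge _ ht]
    have eB : Aux.intervalMap 0 i.1 n (by omega) = vertexMap n i := by
      apply Aux.hom_ext_n
      intro t ht
      rw [Aux.evn_intervalMap _ ht, Aux.evn_vertexMap _ ht]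
      omega
    have eC : SimplexCategory.σ (⟨i.1 + 0, by omega⟩ : Fin (n + 1)) = SimplexCategory.σ i := rfl
    rw [eA, eB, eC] at hp0
    exact (hst 0 0 (principalEdge (n + 1) i) (vertexMap n i) (SimplexCategory.σ i)
      hfree hp0).flip
  · -- squares → Stiff
    intro H k i c d f h j hfree hpo
    obtain ⟨iv, hik⟩ := i
    have hb : (k + 1 : ℕ) < SimplexCategory.len (SimplexCategory.mk (k + 1)) + 1 :=
      Nat.lt_succ_self _
    have hlast : (f.toOrderHom ⟨k + 1, hb⟩ : ℕ) = (f.toOrderHom 0 : ℕ) + (k + 1) :=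
      hfree ⟨k + 1, hb⟩
    have hbound : (f.toOrderHom ⟨k + 1, hb⟩ : ℕ) < c.len + 1 := (f.toOrderHom _).2
    have hclen : (f.toOrderHom 0 : ℕ) + k + 1 ≤ c.len := by omega
    obtain ⟨n, hn⟩ : ∃ n, c.len = n + 1 := ⟨c.len - 1, by omega⟩
    have hc : c = SimplexCategory.mk (n + 1) := by rw [← SimplexCategory.mk_len c, hn]
    subst hc
    obtain ⟨m, hm⟩ : ∃ m, (f.toOrderHom 0 : ℕ) = m := ⟨_, rfl⟩
    rw [hm] at hclen hlast
    have hmn : m + k ≤ n := by clear hbound hlast hm; omega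
    have hmn1 : m + (k + 1) ≤ n + 1 := by clear hbound hlast hm; omega
    have hf : f = Aux.intervalMap (k + 1) m (n + 1) hmn1 := by
      apply Aux.hom_ext
      intro t
      rw [hfree t, hm]
      rfl
    clear hbound hlast hm hfree
    subst hf
    have hp' : IsPushout (SimplexCategory.σ (⟨iv, hik⟩ : Fin (k + 1)))
        (Aux.intervalMap (k + 1) m (n + 1) hmn1)
        (Aux.intervalMap k m n hmn)
        (SimplexCategory.σ (⟨m + iv, by omega⟩ : Fin (n + 1))) :=
      Aux.interval_pushout k iv m n hik hmn
    set u := hp'.desc h j hpo.w with hu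
    set v := hpo.desc (Aux.intervalMap k m n hmn)
      (SimplexCategory.σ (⟨m + iv, by omega⟩ : Fin (n + 1))) hp'.w with hv
    have hu1 : Aux.intervalMap k m n hmn ≫ u = h := hp'.inl_desc _ _ _
    have hu2 : SimplexCategory.σ (⟨m + iv, by omega⟩ : Fin (n + 1)) ≫ u = j :=
      hp'.inr_desc _ _ _
    have hv1 : h ≫ v = Aux.intervalMap k m n hmn := hpo.inl_desc _ _ _
    have hv2 : j ≫ v = SimplexCategory.σ (⟨m + iv, by omega⟩ : Fin (n + 1)) :=
      hpo.inr_desc _ _ _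
    have huv : u ≫ v = 𝟙 _ := by
      apply hp'.hom_ext
      · rw [← Category.assoc, hu1, hv1, Category.comp_id]
      · rw [← Category.assoc, hu2, hv2, Category.comp_id]
    have hvu : v ≫ u = 𝟙 _ := by
      apply hpo.hom_ext
      · rw [← Category.assoc, hv1, hu1, Category.comp_id]
      · rw [← Category.assoc, hv2, hu2, Category.comp_id]
    have hkey := Aux.key X H k iv m n hik hmn
    refine IsPullback.of_iso hkey
      ⟨X.map v.op, X.map u.op, ?_, ?_⟩ (Iso.refl _) (Iso.refl _) (Iso.refl _) ?_ ?_ ?_ ?_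
    · rw [← X.map_comp, ← op_comp, huv, op_id, X.map_id]
    · rw [← X.map_comp, ← op_comp, hvu, op_id, X.map_id]
    · show X.map (Aux.intervalMap k m n hmn).op ≫ 𝟙 _ = X.map v.op ≫ X.map h.op
      rw [Category.comp_id, ← X.map_comp, ← op_comp, hv1]
    · show X.map (SimplexCategory.σ (⟨m + iv, by omega⟩ : Fin (n + 1))).op ≫ 𝟙 _ =
        X.map v.op ≫ X.map j.op
      rw [Category.comp_id, ← X.map_comp, ← op_comp, hv2]
    · simp
    · simp
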